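/- In the chain MDP of Figure 2, with optimal policy π* (which goes left from s₀ then down to s̃), the 0-1 loss satisfies g(π_left) = 1/T and g(π_right) = 1 − 1/T, while the Q-based loss satisfies ℓ(π_left) = 1 and ℓ(π_right) = α/T. In particular, π_right has strictly higher cumulative reward than π_left even though it has strictly higher 0-1 loss. -/

import Mathlib

/-- States of the chain MDP of Figure 2: `s i` for `i ∈ {-k,…,k}` (represented by `i : ℤ`),
the high-reward state `s̃` (`tilde`), and the absorbing terminal state `s_end` (`halt`). -/
inductive ChainSt where
  | s : ℤ → ChainSt
  | tilde : ChainSt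
  | halt : ChainSt
deriving DecidableEq

inductive ChainAct where
  | left | right | down
deriving DecidableEq

/-- Deterministic transitions of the chain MDP with parameter `k`: from `s i` with
`-(k-1) ≤ i ≤ k-1`, `left` goes to `s (i-1)` and `right` to `s (i+1)`; `down` from `s (-(k-1))`
goes to `s̃`; `left` from `s (-k)`, `right` from `s k`, and `left` from `s̃` go to `s_end`;
all unavailable actions go to `s_end`, and `s_end` is absorbing. -/
def chainStep (k : ℕ) : ChainSt → ChainAct → ChainSt
  | .s i, .left => if i = -(k : ℤ) then .halt else if i = (k : ℤ) then .halt else .s (i - 1)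
  | .s i, .right => if i = (k : ℤ) then .halt else if i = -(k : ℤ) then .halt else .s (i + 1)
  | .s i, .down => if i = -((k : ℤ) - 1) then .tilde else .halt
  | .tilde, _ => .halt
  | .halt, _ => .halt

/-- Rewards: `R(s̃) = T`, `R(s k) = T − α`, and `0` otherwise. -/
noncomputable def chainR (k : ℕ) (T : ℕ) (α : ℝ) : ChainSt → ℝ
  | .tilde => (T : ℝ)
  | .s i => if i = (k : ℤ) then (T : ℝ) - α else 0
  | .halt => 0

/-- The (deterministic) trajectory of policy `π` from state `st` after `t` steps. -/
def chainTraj (k : ℕ) (π : ChainSt → ChainAct) (st : ChainSt) (t : ℕ) : ChainSt :=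
  (fun s => chainStep k s (π s))^[t] st

/-- Cumulative reward of policy `π` from the initial state `s 0` over horizon `T`,
so that `J(π) = -(chainJaux ...)`. -/
noncomputable def chainReturn (k : ℕ) (T : ℕ) (α : ℝ) (π : ChainSt → ChainAct) : ℝ :=
  ∑ t ∈ Finset.range T, chainR k T α (chainTraj k π (.s 0) t)

/-- The optimal policy `π*` of the chain MDP: `down` at `s (-(k-1))`, `right` at `s k`,
and `left` otherwise. -/
def chainPiStar (k : ℕ) : ChainSt → ChainAct
  | .s i => if i = -((k : ℤ) - 1) then .down else if i = (k : ℤ) then .right else .left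
  | _ => .left

/-- The average 0-1 disagreement of `π` with `π*` along the trajectory of `π` from `s 0`:
`g(π) = E_{s ∼ d^{(π)}}[𝟙[π(s) ≠ π*(s)]]` (the MDP is deterministic, so `d_t^{(π)}` is a point
mass on the trajectory). -/
noncomputable def chainG (k : ℕ) (T : ℕ) (π : ChainSt → ChainAct) : ℝ :=
  (T : ℝ)⁻¹ * ∑ t ∈ Finset.range T,
    (if π (chainTraj k π (.s 0) t) = chainPiStar k (chainTraj k π (.s 0) t) then (0 : ℝ) else 1)

/-- The Q-based loss `ℓ(π) = T⁻¹(J(π) − J(π*))`, with `J(π)` the negative cumulative reward. -/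
noncomputable def chainL (k : ℕ) (T : ℕ) (α : ℝ) (π : ChainSt → ChainAct) : ℝ :=
  (T : ℝ)⁻¹ * ((-(chainReturn k T α π)) - (-(chainReturn k T α (chainPiStar k))))

lemma trajLeft (k : ℕ) (hk : 1 ≤ k) (t : ℕ) :
    chainTraj k (fun _ => ChainAct.left) (.s 0) t =
      if t ≤ k then .s (-(t : ℤ)) else .halt := by
  induction t with
  | zero => simp [chainTraj]
  | succ n ih =>
    rw [chainTraj, Function.iterate_succ_apply']
    rw [show (fun s => chainStep k s ((fun _ => ChainAct.left) s))^[n] (ChainSt.s 0) =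
      chainTraj k (fun _ => ChainAct.left) (.s 0) n from rfl, ih]
    rcases lt_trichotomy n k with h | h | h
    · have h1 : n ≤ k := le_of_lt h
      have h2 : n + 1 ≤ k := h
      have hne : ¬(-(n:ℤ) = (k:ℤ)) := by omega
      have hne2 : ¬(-(n:ℤ) = -(k:ℤ)) := by omega
      simp only [if_pos h1, chainStep, if_neg hne2, if_neg hne, if_pos h2]
      congr 1; omega
    · subst h
      have hne : ¬ (n + 1 ≤ n) := by omega
      simp only [if_pos (le_refl n), chainStep, if_pos rfl, if_neg hne]
      simp
    · have h1 : ¬ n ≤ k := by omega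
      have h2 : ¬ n + 1 ≤ k := by omega
      simp only [if_neg h1, if_neg h2, chainStep]

lemma trajRight (k : ℕ) (hk : 1 ≤ k) (t : ℕ) :
    chainTraj k (fun _ => ChainAct.right) (.s 0) t =
      if t ≤ k then .s ((t : ℤ)) else .halt := by
  induction t with
  | zero => simp [chainTraj]
  | succ n ih =>
    rw [chainTraj, Function.iterate_succ_apply']
    rw [show (fun s => chainStep k s ((fun _ => ChainAct.right) s))^[n] (ChainSt.s 0) =
      chainTraj k (fun _ => ChainAct.right) (.s 0) n from rfl, ih]
    rcases lt_trichotomy n k with h | h | h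
    · have h1 : n ≤ k := le_of_lt h
      have h2 : n + 1 ≤ k := h
      have hne : ¬((n:ℤ) = (k:ℤ)) := by omega
      have hne2 : ¬((n:ℤ) = -(k:ℤ)) := by omega
      simp only [if_pos h1, chainStep, if_neg hne2, if_neg hne, if_pos h2]
      norm_num
    · have h1 : n ≤ k := le_of_eq h
      have h2 : ¬ (n + 1 ≤ k) := by omega
      have he : (n:ℤ) = (k:ℤ) := by omega
      simp only [if_pos h1, chainStep, if_pos he, if_neg h2]
    · have h1 : ¬ n ≤ k := by omega
      have h2 : ¬ n + 1 ≤ k := by omega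
      simp only [if_neg h1, if_neg h2, chainStep]

lemma trajStar (k : ℕ) (hk : 1 ≤ k) (t : ℕ) :
    chainTraj k (chainPiStar k) (.s 0) t =
      if t < k then .s (-(t : ℤ)) else if t = k then .tilde else .halt := by
  induction t with
  | zero =>
    have : 0 < k := hk
    simp [chainTraj, this]
  | succ n ih =>
    rw [chainTraj, Function.iterate_succ_apply']
    rw [show (fun s => chainStep k s (chainPiStar k s))^[n] (ChainSt.s 0) =
      chainTraj k (chainPiStar k) (.s 0) n from rfl, ih]
    rcases lt_trichotomy n k with h | h | h
    · rw [if_pos h]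
      by_cases h2 : n + 1 = k
      · have hd : (-(n:ℤ)) = -((k:ℤ) - 1) := by omega
        have h3 : ¬ (n + 1 < k) := by omega
        simp only [chainPiStar, if_pos hd, chainStep, if_pos hd, if_neg h3, if_pos h2]
      · have h3 : n + 1 < k := by omega
        have hd : ¬((-(n:ℤ)) = -((k:ℤ) - 1)) := by omega
        have hd2 : ¬((-(n:ℤ)) = (k:ℤ)) := by omega
        have hd3 : ¬((-(n:ℤ)) = -(k:ℤ)) := by omega
        simp only [chainPiStar, if_neg hd, if_neg hd2, chainStep, if_neg hd3, if_pos h3]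
        congr 1; omega
    · have h1 : ¬ (n < k) := by omega
      have h2 : ¬ (n + 1 < k) := by omega
      have h3 : ¬ (n + 1 = k) := by omega
      simp only [if_neg h1, if_pos h, chainPiStar, chainStep, if_neg h2, if_neg h3]
    · have h1 : ¬ (n < k) := by omega
      have h2 : ¬ (n = k) := by omega
      have h3 : ¬ (n + 1 < k) := by omega
      have h4 : ¬ (n + 1 = k) := by omega
      simp only [if_neg h1, if_neg h2, if_neg h3, if_neg h4, chainPiStar, chainStep]

/-- Theorem 2: `g(π_left) = 1/T`, `g(π_right) = 1 − 1/T`, `ℓ(π_left) = 1`,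
`ℓ(π_right) = α/T`; in particular `π_right` has strictly higher cumulative reward than `π_left`
even though it has strictly higher 0-1 loss. -/
theorem chain_zero_one_loss_vs_q_loss (k : ℕ) (hk : 1 ≤ k) (α : ℝ) (hα : 0 < α ∧ α < 1)
    (T : ℕ) (hT : T = 3 * (k + 1)) :
    chainG k T (fun _ => ChainAct.left) = 1 / (T : ℝ) ∧
    chainG k T (fun _ => ChainAct.right) = 1 - 1 / (T : ℝ) ∧
    chainL k T α (fun _ => ChainAct.left) = 1 ∧
    chainL k T α (fun _ => ChainAct.right) = α / (T : ℝ) ∧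
    chainReturn k T α (fun _ => ChainAct.left) < chainReturn k T α (fun _ => ChainAct.right) ∧
    chainG k T (fun _ => ChainAct.left) < chainG k T (fun _ => ChainAct.right) := by
  obtain ⟨hα0, hα1⟩ := hα
  have hTk : k < T := by omega
  have hT0 : (0:ℕ) < T := by omega
  have hTR : (0:ℝ) < (T:ℝ) := by exact_mod_cast hT0
  have hTne : (T:ℝ) ≠ 0 := ne_of_gt hTR
  have hRetStar : chainReturn k T α (chainPiStar k) = (T:ℝ) := by
    unfold chainReturn
    rw [Finset.sum_eq_single k]
    · rw [trajStar k hk k]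
      have : ¬ (k < k) := lt_irrefl k
      simp [this, chainR]
    · intro t ht hne
      rw [trajStar k hk t]
      by_cases h : t < k
      · have : ¬ (-(t:ℤ) = (k:ℤ)) := by omega
        simp [h, chainR, this]
      · have h1 : ¬ (t < k) := h
        simp [h1, hne, chainR]
    · intro h; exact absurd (Finset.mem_range.mpr hTk) h
  have hRetLeft : chainReturn k T α (fun _ => ChainAct.left) = 0 := by
    unfold chainReturn
    apply Finset.sum_eq_zero
    intro t ht
    rw [trajLeft k hk t]
    by_cases h : t ≤ k
    · have : ¬ (-(t:ℤ) = (k:ℤ)) := by omega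
      simp [h, chainR, this]
    · simp [h, chainR]
  have hRetRight : chainReturn k T α (fun _ => ChainAct.right) = (T:ℝ) - α := by
    unfold chainReturn
    rw [Finset.sum_eq_single k]
    · rw [trajRight k hk k]; simp [chainR]
    · intro t ht hne
      rw [trajRight k hk t]
      by_cases h : t ≤ k
      · have : ¬ ((t:ℤ) = (k:ℤ)) := by omega
        simp [h, chainR, this]
      · simp [h, chainR]
    · intro h; exact absurd (Finset.mem_range.mpr hTk) h
  have hGLeft : chainG k T (fun _ => ChainAct.left) = 1 / (T:ℝ) := by
    unfold chainG
    have hsum : ∑ t ∈ Finset.range T,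
        (if (fun _ => ChainAct.left) (chainTraj k (fun _ => ChainAct.left) (.s 0) t) =
            chainPiStar k (chainTraj k (fun _ => ChainAct.left) (.s 0) t) then (0:ℝ) else 1)
        = ∑ t ∈ Finset.range T, (if t = k - 1 then (1:ℝ) else 0) := by
      apply Finset.sum_congr rfl
      intro t ht
      rw [trajLeft k hk t]
      by_cases h : t ≤ k
      · rw [if_pos h]
        by_cases h2 : t = k - 1
        · have hd : (-(t:ℤ)) = -((k:ℤ) - 1) := by omega
          simp only [chainPiStar, if_pos hd, if_pos h2]
          simp
        · have hd : ¬ ((-(t:ℤ)) = -((k:ℤ) - 1)) := by omega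
          have hd2 : ¬ ((-(t:ℤ)) = (k:ℤ)) := by omega
          simp only [chainPiStar, if_neg hd, if_neg hd2, if_neg h2]
          simp
      · have h2 : ¬ (t = k - 1) := by omega
        rw [if_neg h, if_neg h2]
        simp [chainPiStar]
    rw [hsum, Finset.sum_ite_eq' (Finset.range T) (k-1) (fun _ => (1:ℝ))]
    have : k - 1 ∈ Finset.range T := Finset.mem_range.mpr (by omega)
    rw [if_pos this]
    ring
  have hGRight : chainG k T (fun _ => ChainAct.right) = 1 - 1 / (T:ℝ) := by
    unfold chainG
    have hsum : ∑ t ∈ Finset.range T,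
        (if (fun _ => ChainAct.right) (chainTraj k (fun _ => ChainAct.right) (.s 0) t) =
            chainPiStar k (chainTraj k (fun _ => ChainAct.right) (.s 0) t) then (0:ℝ) else 1)
        = ∑ t ∈ Finset.range T, ((1:ℝ) - if t = k then (1:ℝ) else 0) := by
      apply Finset.sum_congr rfl
      intro t ht
      rw [trajRight k hk t]
      by_cases h2 : t = k
      · have h : t ≤ k := le_of_eq h2
        have hd : ¬ ((t:ℤ) = -((k:ℤ) - 1)) := by omega
        have he : (t:ℤ) = (k:ℤ) := by omega
        rw [if_pos h]
        simp only [chainPiStar, if_neg hd, if_pos he, if_pos h2]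
        simp
      · by_cases h : t ≤ k
        · rw [if_pos h]
          by_cases hd : ((t:ℤ)) = -((k:ℤ) - 1)
          · simp only [chainPiStar, if_pos hd, if_neg h2]
            simp
          · have hd2 : ¬ ((t:ℤ) = (k:ℤ)) := by omega
            simp only [chainPiStar, if_neg hd, if_neg hd2, if_neg h2]
            simp
        · rw [if_neg h]
          simp only [chainPiStar, if_neg h2]
          simp
    rw [hsum, Finset.sum_sub_distrib,
      Finset.sum_ite_eq' (Finset.range T) k (fun _ => (1:ℝ))]
    rw [if_pos (Finset.mem_range.mpr hTk)]
    simp only [Finset.sum_const, Finset.card_range, nsmul_eq_mul, mul_one]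
    field_simp
  have hLLeft : chainL k T α (fun _ => ChainAct.left) = 1 := by
    unfold chainL
    rw [hRetLeft, hRetStar]
    field_simp
    ring
  have hLRight : chainL k T α (fun _ => ChainAct.right) = α / (T:ℝ) := by
    unfold chainL
    rw [hRetRight, hRetStar]
    field_simp
    ring
  refine ⟨hGLeft, hGRight, hLLeft, hLRight, ?_, ?_⟩
  · rw [hRetLeft, hRetRight]
    have h6 : (6:ℝ) ≤ (T:ℝ) := by exact_mod_cast (by omega : 6 ≤ T)
    linarith
  · rw [hGLeft, hGRight]
    have h6 : (6:ℝ) ≤ (T:ℝ) := by exact_mod_cast (by omega : 6 ≤ T)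
    rw [div_lt_iff₀ hTR, sub_mul, div_mul_cancel₀ _ hTne]
    nlinarith
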